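/- For integers k ≥ 2 and q ≥ 3, and any integer a with 1 ≤ a < q/2 and gcd(a,q) = 1, the number (ζ(k, a/q) + (-1)^k ζ(k, 1 - a/q)) / (iπ)^k lies in the q-th cyclotomic field ℚ(ζ_q). -/

import Mathlib

open Complex

/-- The Hurwitz zeta function `ζ(k,x) = ∑_{n≥0} 1/(n+x)^k`. -/
noncomputable def hurwitz (k : ℕ) (x : ℝ) : ℝ :=
  ∑' n : ℕ, 1 / ((n : ℝ) + x) ^ k

open Finset
open scoped Nat

local notation "π" => Real.pi

lemma summable_aux {k : ℕ} (hk : 2 ≤ k) {x : ℝ} (hx : 0 < x) :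
    Summable fun n : ℕ => 1 / ((n : ℝ) + x) ^ k := by
  rw [← summable_nat_add_iff 1]
  have h0 : Summable fun n : ℕ => 1 / ((n : ℝ) + 1) ^ k := by
    have := (summable_nat_add_iff 1).mpr ((Real.summable_one_div_nat_pow (p := k)).mpr (by omega))
    simpa using this
  refine Summable.of_nonneg_of_le (fun n => by positivity) (fun n => ?_) h0
  have h1 : (0:ℝ) < (n:ℝ) + 1 := by positivity
  have h2 : ((n:ℝ) + 1) ≤ ((n + 1 : ℕ):ℝ) + x := by push_cast; linarith
  have := pow_le_pow_left₀ h1.le h2 k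
  exact one_div_le_one_div_of_le (pow_pos h1 k) this

lemma exp_sum {q : ℕ} (hq : 0 < q) (c : ℤ) :
    ∑ j ∈ Finset.range q, Complex.exp (2 * π * I * ((c * j : ℤ):ℂ) / q) =
      if (q : ℤ) ∣ c then (q : ℂ) else 0 := by
  have hq' : (q:ℂ) ≠ 0 := Nat.cast_ne_zero.mpr hq.ne'
  have h2πI : (2 * (π:ℂ) * I) ≠ 0 :=
    mul_ne_zero (mul_ne_zero two_ne_zero (ofReal_ne_zero.mpr Real.pi_ne_zero)) I_ne_zero
  have hterm : ∀ j ∈ Finset.range q, Complex.exp (2 * π * I * ((c * j : ℤ):ℂ) / q)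
      = Complex.exp (2 * π * I * c / q) ^ j := by
    intro j _
    rw [← Complex.exp_nat_mul]
    congr 1; push_cast; ring
  rw [Finset.sum_congr rfl hterm]
  rcases eq_or_ne (Complex.exp (2 * π * I * c / q)) 1 with h1 | h1
  · have hdvd : (q:ℤ) ∣ c := by
      rw [Complex.exp_eq_one_iff] at h1
      obtain ⟨n, hn⟩ := h1
      refine ⟨n, ?_⟩
      have h3 : (2 * (π:ℂ) * I) * (c:ℂ) = (2 * (π:ℂ) * I) * ((q:ℂ) * n) := by
        field_simp at hn
        linear_combination (2 * (π:ℂ) * I) * hn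
      have := mul_left_cancel₀ h2πI h3
      exact_mod_cast this
    simp [h1, hdvd]
  · have hdvd : ¬ (q:ℤ) ∣ c := by
      rintro ⟨n, hn⟩
      apply h1
      rw [hn]
      rw [show 2 * (π:ℂ) * I * (((q:ℤ) * n : ℤ):ℂ) / q = (n:ℤ) * (2 * π * I) by
        push_cast; field_simp]
      exact Complex.exp_int_mul_two_pi_mul_I n
    rw [geom_sum_eq h1]
    have hq1 : Complex.exp (2 * π * I * c / q) ^ q = 1 := by
      rw [← Complex.exp_nat_mul,
        show (q:ℂ) * (2 * π * I * c / q) = (c:ℤ) * (2 * π * I) by push_cast; field_simp]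
      exact Complex.exp_int_mul_two_pi_mul_I c
    rw [hq1]
    simp [hdvd]

lemma mod_iff {q b : ℕ} (hb : b < q) (m : ℕ) :
    ((q:ℤ) ∣ (m:ℤ) - (b:ℤ)) ↔ m % q = b := by
  have hb' : (b:ℤ) % q = b := Int.emod_eq_of_lt (by positivity) (by exact_mod_cast hb)
  rw [Int.dvd_iff_emod_eq_zero, ← Int.emod_eq_emod_iff_emod_sub_eq_zero,
    ← Int.natCast_mod, hb']
  exact ⟨fun h => by exact_mod_cast h, fun h => by exact_mod_cast h⟩

lemma hurwitz_eq_tsum {k q b : ℕ} (hk : 2 ≤ k) (hb1 : 1 ≤ b) (hbq : b < q) :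
    ((hurwitz k ((b:ℝ) / q) : ℝ) : ℂ) =
      ∑' m : ℕ, (if m % q = b then (q:ℂ) ^ k / (m:ℂ) ^ k else 0) := by
  classical
  have hq0 : 0 < q := Nat.pos_of_ne_zero (by omega)
  have hq' : (q:ℂ) ≠ 0 := Nat.cast_ne_zero.mpr hq0.ne'
  set f : ℕ → ℂ := fun m => if m % q = b then (q:ℂ) ^ k / (m:ℂ) ^ k else 0 with hf
  have hg : Function.Injective (fun n : ℕ => q * n + b) := fun m n h => by
    simp only [add_left_inj] at h
    exact Nat.eq_of_mul_eq_mul_left hq0 h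
  have hsupp : Function.support f ⊆ Set.range (fun n : ℕ => q * n + b) := by
    intro m hm
    have hmb : m % q = b := by
      by_contra h
      exact hm (by simp [hf, h])
    refine ⟨m / q, ?_⟩
    show q * (m / q) + b = m
    rw [← hmb]; exact Nat.div_add_mod m q
  have key : ∀ n : ℕ, f (q * n + b) = 1 / ((n:ℂ) + (b:ℂ)/q) ^ k := by
    intro n
    have hmod : (q * n + b) % q = b := by
      rw [Nat.mul_add_mod, Nat.mod_eq_of_lt hbq]
    rw [hf]
    simp only []
    rw [if_pos hmod]
    have h1 : (((q * n + b : ℕ)):ℂ) = (q:ℂ) * ((n:ℂ) + (b:ℂ)/q) := by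
      push_cast; field_simp
    rw [h1, mul_pow, ← div_div, div_self (pow_ne_zero k hq')]
  rw [hurwitz, Complex.ofReal_tsum]
  have hcast : ∀ n : ℕ, ((1 / ((n : ℝ) + (b:ℝ)/q) ^ k : ℝ) : ℂ)
      = 1 / ((n:ℂ) + (b:ℂ)/q) ^ k := by intro n; push_cast; ring
  rw [tsum_congr hcast, tsum_congr fun n => (key n).symm]
  exact hg.tsum_eq hsupp

lemma summable_tsum {k q b : ℕ} (hk : 2 ≤ k) (hb1 : 1 ≤ b) (hbq : b < q) :
    Summable (fun m : ℕ => if m % q = b then (q:ℂ) ^ k / (m:ℂ) ^ k else 0) := by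
  classical
  have hq0 : 0 < q := Nat.pos_of_ne_zero (by omega)
  have hq' : (q:ℂ) ≠ 0 := Nat.cast_ne_zero.mpr hq0.ne'
  set f : ℕ → ℂ := fun m => if m % q = b then (q:ℂ) ^ k / (m:ℂ) ^ k else 0 with hf
  have hg : Function.Injective (fun n : ℕ => q * n + b) := fun m n h => by
    simp only [add_left_inj] at h
    exact Nat.eq_of_mul_eq_mul_left hq0 h
  have hsupp : ∀ m ∉ Set.range (fun n : ℕ => q * n + b), f m = 0 := by
    intro m hm
    by_contra h
    have hmb : m % q = b := by
      by_contra h2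
      exact h (by simp [hf, h2])
    refine hm ⟨m / q, ?_⟩
    show q * (m / q) + b = m
    rw [← hmb]; exact Nat.div_add_mod m q
  rw [← hg.summable_iff hsupp]
  have hx : (0:ℝ) < (b:ℝ)/q := by
    have : (0:ℝ) < (b:ℝ) := by exact_mod_cast hb1
    positivity
  have hs : Summable (fun n : ℕ => ((1 / ((n : ℝ) + (b:ℝ)/q) ^ k : ℝ) : ℂ)) := by
    rw [Complex.summable_ofReal]
    exact summable_aux hk hx
  refine hs.congr fun n => ?_
  have hmod : (q * n + b) % q = b := by
    rw [Nat.mul_add_mod, Nat.mod_eq_of_lt hbq]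
  show ((1 / ((n : ℝ) + (b:ℝ)/q) ^ k : ℝ) : ℂ) = f (q * n + b)
  rw [hf]
  simp only []
  rw [if_pos hmod]
  have h1 : (((q * n + b : ℕ)):ℂ) = (q:ℂ) * ((n:ℂ) + (b:ℂ)/q) := by
    push_cast; field_simp
  rw [h1, mul_pow, ← div_div, div_self (pow_ne_zero k hq')]
  push_cast; ring

lemma pointwise {k q A : ℕ} (hk : 2 ≤ k) (hA1 : 1 ≤ A) (hAq : A < q) (m : ℕ) :
    (if m % q = A then (q:ℂ) ^ k / (m:ℂ) ^ k else 0)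
      + (-1:ℂ) ^ k * (if m % q = q - A then (q:ℂ) ^ k / (m:ℂ) ^ k else 0)
    = ∑ j ∈ Finset.range q, ((q:ℂ) ^ (k-1) * Complex.exp (2 * π * I / q) ^ (-((j*A:ℕ)):ℤ)) *
        ((1:ℂ) / (m:ℂ) ^ k * (fourier (m:ℤ) (((j:ℝ)/q : ℝ) : UnitAddCircle)
           + (-1:ℂ) ^ k * fourier (-(m:ℤ)) (((j:ℝ)/q : ℝ) : UnitAddCircle))) := by
  have hq0 : 0 < q := by omega
  have hq' : (q:ℂ) ≠ 0 := Nat.cast_ne_zero.mpr hq0.ne'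
  have hterm : ∀ j ∈ Finset.range q,
      ((q:ℂ) ^ (k-1) * Complex.exp (2 * π * I / q) ^ (-((j*A:ℕ)):ℤ)) *
        ((1:ℂ) / (m:ℂ) ^ k * (fourier (m:ℤ) (((j:ℝ)/q : ℝ) : UnitAddCircle)
           + (-1:ℂ) ^ k * fourier (-(m:ℤ)) (((j:ℝ)/q : ℝ) : UnitAddCircle)))
      = (q:ℂ) ^ (k-1) * (1 / (m:ℂ) ^ k) *
          (Complex.exp (2 * π * I * ((((m:ℤ) - A) * j : ℤ):ℂ) / q)
           + (-1:ℂ) ^ k * Complex.exp (2 * π * I * (((-(m:ℤ) - A) * j : ℤ):ℂ) / q)) := by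
    intro j _
    rw [fourier_coe_apply, fourier_coe_apply,
      show Complex.exp (2 * π * I / q) ^ (-((j*A:ℕ)):ℤ)
        = Complex.exp ((-((j*A:ℕ)):ℤ) * (2 * π * I / q)) from (Complex.exp_int_mul _ _).symm]
    have e1 : Complex.exp ((-((j*A:ℕ)):ℤ) * (2 * π * I / q)) *
        Complex.exp (2 * π * I * ((m:ℤ):ℂ) * (((j:ℝ)/q : ℝ):ℂ) / (1:ℝ))
        = Complex.exp (2 * π * I * ((((m:ℤ) - A) * j : ℤ):ℂ) / q) := by
      rw [← Complex.exp_add]; congr 1; push_cast; field_simp; ring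
    have e2 : Complex.exp ((-((j*A:ℕ)):ℤ) * (2 * π * I / q)) *
        Complex.exp (2 * π * I * ((-(m:ℤ) : ℤ) : ℂ) * (((j:ℝ)/q : ℝ):ℂ) / (1:ℝ))
        = Complex.exp (2 * π * I * (((-(m:ℤ) - A) * j : ℤ):ℂ) / q) := by
      rw [← Complex.exp_add]; congr 1; push_cast; field_simp; ring
    set w := Complex.exp ((-((j*A:ℕ)):ℤ) * (2 * π * I / q)) with hw
    set F1 := Complex.exp (2 * π * I * ((m:ℤ):ℂ) * (((j:ℝ)/q : ℝ):ℂ) / (1:ℝ)) with hF1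
    set F2 := Complex.exp (2 * π * I * ((-(m:ℤ) : ℤ) : ℂ) * (((j:ℝ)/q : ℝ):ℂ) / (1:ℝ)) with hF2
    calc ((q:ℂ) ^ (k-1) * w) * ((1:ℂ) / (m:ℂ) ^ k * (F1 + (-1:ℂ) ^ k * F2))
        = (q:ℂ) ^ (k-1) * (1 / (m:ℂ) ^ k) * ((w * F1) + (-1:ℂ) ^ k * (w * F2)) := by ring
      _ = _ := by rw [e1, e2]
  rw [Finset.sum_congr rfl hterm, ← Finset.mul_sum, Finset.sum_add_distrib, ← Finset.mul_sum,
    exp_sum hq0 ((m:ℤ) - A), exp_sum hq0 (-(m:ℤ) - A)]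
  have hd1 : ((q:ℤ) ∣ (m:ℤ) - (A:ℤ)) ↔ m % q = A := mod_iff hAq m
  have hd2 : ((q:ℤ) ∣ -(m:ℤ) - (A:ℤ)) ↔ m % q = q - A := by
    rw [show -(m:ℤ) - (A:ℤ) = -((q:ℤ) + ((m:ℤ) - ((q - A : ℕ):ℤ))) by
        push_cast [Nat.cast_sub hAq.le]; ring,
      dvd_neg, dvd_add_right (dvd_refl _)]
    exact mod_iff (by omega) m
  simp only [hd1, hd2]
  have hqk' : (q:ℂ) ^ k = (q:ℂ) ^ (k-1) * q := by rw [← pow_succ]; congr 1; omega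
  simp only [hqk']
  split_ifs <;> ring

lemma bern_eval (kk j q : ℕ) :
    ((bernoulliFun kk ((j:ℝ)/(q:ℝ)) : ℝ) : ℂ)
      = (((Polynomial.bernoulli kk).eval ((j:ℚ)/(q:ℚ)) : ℚ) : ℂ) := by
  have hx : ((j:ℝ)/(q:ℝ)) = algebraMap ℚ ℝ ((j:ℚ)/(q:ℚ)) := by
    rw [eq_ratCast (algebraMap ℚ ℝ)]; push_cast; ring
  rw [bernoulliFun, hx, Polynomial.eval_map, Polynomial.eval₂_at_apply, eq_ratCast]
  norm_cast

theorem hurwitz_combination_mem_cyclotomic (k q : ℕ) (hk : 2 ≤ k) (hq : 3 ≤ q)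
    (a : ℕ) (ha1 : 1 ≤ a) (haq : 2 * a < q) (hcop : Nat.Coprime a q) :
    ((hurwitz k (a / q) + (-1 : ℝ) ^ k * hurwitz k (1 - a / q) : ℝ) : ℂ) /
        (Complex.I * (Real.pi : ℂ)) ^ k ∈
      IntermediateField.adjoin ℚ
        {Complex.exp (2 * Real.pi * Complex.I / q)} := by
  have haq' : a < q := by omega
  have hb1 : 1 ≤ q - a := by omega
  have hbq' : q - a < q := by omega
  have hq0 : 0 < q := by omega
  have hq0' : (q:ℝ) ≠ 0 := Nat.cast_ne_zero.mpr hq0.ne'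
  have harg : (1 : ℝ) - (a:ℝ)/(q:ℝ) = ((q - a : ℕ):ℝ)/(q:ℝ) := by
    rw [Nat.cast_sub haq'.le]; field_simp
  rw [show ((hurwitz k ((a:ℝ) / q) + (-1 : ℝ) ^ k * hurwitz k (1 - (a:ℝ) / q) : ℝ) : ℂ)
      = ((hurwitz k ((a:ℝ)/q) : ℝ) : ℂ)
        + (-1:ℂ)^k * ((hurwitz k (((q - a : ℕ):ℝ)/q) : ℝ):ℂ) by
    rw [harg]; push_cast; ring]
  rw [hurwitz_eq_tsum hk ha1 haq', hurwitz_eq_tsum hk hb1 hbq', ← tsum_mul_left,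
    ← Summable.tsum_add (summable_tsum hk ha1 haq') (Summable.mul_left _ (summable_tsum hk hb1 hbq'))]
  have hxj : ∀ j ∈ Finset.range q, ((j:ℝ)/(q:ℝ)) ∈ Set.Icc (0:ℝ) 1 := by
    intro j hj
    have hjq : (j:ℝ) ≤ (q:ℝ) := by exact_mod_cast (Finset.mem_range.mp hj).le
    constructor
    · positivity
    · rw [div_le_one (by positivity)]; exact hjq
  have hHS : HasSum (fun m : ℕ => ∑ j ∈ Finset.range q,
      ((q:ℂ) ^ (k-1) * Complex.exp (2 * π * I / q) ^ (-((j*a:ℕ)):ℤ)) *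
        ((1:ℂ) / (m:ℂ) ^ k * (fourier (m:ℤ) (((j:ℝ)/q : ℝ) : UnitAddCircle)
           + (-1:ℂ) ^ k * fourier (-(m:ℤ)) (((j:ℝ)/q : ℝ) : UnitAddCircle))))
      (∑ j ∈ Finset.range q,
      ((q:ℂ) ^ (k-1) * Complex.exp (2 * π * I / q) ^ (-((j*a:ℕ)):ℤ)) *
        (-(2 * (π:ℂ) * I) ^ k / (k ! : ℂ) * ((bernoulliFun k ((j:ℝ)/q) : ℝ) : ℂ))) :=
    hasSum_sum fun j hj => (hasSum_one_div_nat_pow_mul_fourier hk (hxj j hj)).mul_left _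
  rw [tsum_congr (fun m => pointwise hk ha1 haq' m), hHS.tsum_eq, Finset.sum_div]
  have hζ : Complex.exp (2 * Real.pi * Complex.I / q) ∈
      IntermediateField.adjoin ℚ {Complex.exp (2 * Real.pi * Complex.I / q)} :=
    IntermediateField.mem_adjoin_simple_self ℚ _
  have hIπ : (Complex.I * (Real.pi:ℂ)) ^ k ≠ 0 :=
    pow_ne_zero _ (mul_ne_zero I_ne_zero (ofReal_ne_zero.mpr Real.pi_ne_zero))
  refine sum_mem fun j hj => ?_
  have key : ((q:ℂ) ^ (k-1) * Complex.exp (2 * π * I / q) ^ (-((j*a:ℕ)):ℤ)) *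
        (-(2 * (π:ℂ) * I) ^ k / (k ! : ℂ) * ((bernoulliFun k ((j:ℝ)/q) : ℝ) : ℂ))
        / (Complex.I * (Real.pi:ℂ)) ^ k
      = Complex.exp (2 * π * I / q) ^ (-((j*a:ℕ)):ℤ) *
        ((( -((q:ℚ)^(k-1) * 2^k / (k ! : ℚ)) * (Polynomial.bernoulli k).eval ((j:ℚ)/(q:ℚ)) : ℚ)) : ℂ) := by
    rw [bern_eval]
    have h2k : (2 * (π:ℂ) * I) ^ k = 2 ^ k * (Complex.I * (Real.pi:ℂ)) ^ k := by
      rw [show (2 * (π:ℂ) * I) = 2 * (Complex.I * (Real.pi:ℂ)) by ring, mul_pow]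
    rw [h2k, div_eq_iff hIπ]
    push_cast
    ring
  rw [key]
  refine mul_mem ?_ ?_
  · rw [zpow_neg, zpow_natCast]
    exact inv_mem (pow_mem hζ _)
  · rw [show ((( -((q:ℚ)^(k-1) * 2^k / (k ! : ℚ)) * (Polynomial.bernoulli k).eval ((j:ℚ)/(q:ℚ)) : ℚ)) : ℂ)
        = algebraMap ℚ ℂ ( -((q:ℚ)^(k-1) * 2^k / (k ! : ℚ)) * (Polynomial.bernoulli k).eval ((j:ℚ)/(q:ℚ)))
      from (eq_ratCast (algebraMap ℚ ℂ) _).symm]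
    exact IntermediateField.algebraMap_mem _ _
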